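/- arXiv:1410.4582 — 3 statements merged into one kernel-verified Lean document; each statement's English description precedes it below -/
import Mathlib

section
/- Let d ≥ 2 and let Δ be a pure d-dimensional flag-no-square simplicial complex in which every (d−1)-dimensional face is contained in at least two facets (no free (d−1)-faces). Then the number of facets satisfies f_d(Δ) > (25/12)^{2^{d−2}}. -/
open Finset

variable {V : Type} [DecidableEq V] [Fintype V]

/-- `K` is (the set of faces of) an abstract simplicial complex on `V`:
nonempty (contains the empty face) and closed under taking subsets. -/
def IsComplex (K : Finset (Finset V)) : Prop :=
  ∅ ∈ K ∧ ∀ σ ∈ K, ∀ τ ⊆ σ, τ ∈ K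

/-- The facets (maximal faces) of `K`. -/
def facets (K : Finset (Finset V)) : Finset (Finset V) :=
  K.filter fun σ => ∀ τ ∈ K, σ ⊆ τ → τ = σ

/-- `K` is pure `d`-dimensional: every facet has `d + 1` vertices. -/
def IsPure (K : Finset (Finset V)) (d : ℕ) : Prop :=
  ∀ σ ∈ facets K, σ.card = d + 1

/-- `fNum K i` is the number of `i`-dimensional faces (faces with `i + 1` vertices). -/
def fNum (K : Finset (Finset V)) (i : ℕ) : ℕ :=
  (K.filter fun σ => σ.card = i + 1).card

/-- `K` is flag: every set of vertices of `K` that are pairwise joined by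
edges of `K` is a face of `K`. -/
def IsFlag (K : Finset (Finset V)) : Prop :=
  ∀ τ : Finset V, (∀ v ∈ τ, ({v} : Finset V) ∈ K) →
    (∀ u ∈ τ, ∀ w ∈ τ, u ≠ w → ({u, w} : Finset V) ∈ K) → τ ∈ K

/-- `K` has no induced 4-cycle: there are no four distinct vertices `a b c d`
with `ab, bc, cd, da` faces and `ac, bd` non-faces. -/
def NoSquare (K : Finset (Finset V)) : Prop :=
  ¬ ∃ a b c d : V, ({a, b, c, d} : Finset V).card = 4 ∧
    ({a, b} : Finset V) ∈ K ∧ ({b, c} : Finset V) ∈ K ∧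
    ({c, d} : Finset V) ∈ K ∧ ({d, a} : Finset V) ∈ K ∧
    ({a, c} : Finset V) ∉ K ∧ ({b, d} : Finset V) ∉ K

/-- Every face with `d` vertices (i.e. of dimension `d - 1`) is contained in
at least two facets. -/
def NoFree (K : Finset (Finset V)) (d : ℕ) : Prop :=
  ∀ σ ∈ K, σ.card = d → 2 ≤ ((facets K).filter fun F => σ ⊆ F).card

/-- The link of a face `σ`. -/
def link (K : Finset (Finset V)) (σ : Finset V) : Finset (Finset V) :=
  K.filter fun τ => τ ∩ σ = ∅ ∧ τ ∪ σ ∈ K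

section Basic

variable {K : Finset (Finset V)} {d : ℕ}

lemma facet_mem {F : Finset V} (hF : F ∈ facets K) : F ∈ K :=
  (Finset.mem_filter.mp hF).1

lemma facet_max {F : Finset V} (hF : F ∈ facets K) : ∀ τ ∈ K, F ⊆ τ → τ = F :=
  (Finset.mem_filter.mp hF).2

lemma subface_mem (hK : IsComplex K) {σ τ : Finset V} (hσ : σ ∈ K) (h : τ ⊆ σ) : τ ∈ K :=
  hK.2 σ hσ τ h

lemma single_mem (hK : IsComplex K) {σ : Finset V} (hσ : σ ∈ K) {x : V} (hx : x ∈ σ) :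
    ({x} : Finset V) ∈ K :=
  subface_mem hK hσ (by simpa using hx)

lemma pair_mem (hK : IsComplex K) {σ : Finset V} (hσ : σ ∈ K) {x y : V}
    (hx : x ∈ σ) (hy : y ∈ σ) : ({x, y} : Finset V) ∈ K :=
  subface_mem hK hσ (by intro z hz; simp at hz; rcases hz with h | h <;> simp [h, hx, hy])

lemma exists_facet (hK : IsComplex K) {σ : Finset V} (hσ : σ ∈ K) :
    ∃ F ∈ facets K, σ ⊆ F := by
  obtain ⟨F, hF, hmax⟩ := (K.filter (fun τ => σ ⊆ τ)).exists_max_image Finset.card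
    ⟨σ, by simp [hσ]⟩
  simp only [Finset.mem_filter] at hF
  refine ⟨F, Finset.mem_filter.mpr ⟨hF.1, ?_⟩, hF.2⟩
  intro τ hτ hFτ
  exact (Finset.eq_of_subset_of_card_le hFτ
    (hmax τ (Finset.mem_filter.mpr ⟨hτ, hF.2.trans hFτ⟩))).symm

lemma face_card_le (hK : IsComplex K) (hpure : IsPure K d) {σ : Finset V} (hσ : σ ∈ K) :
    σ.card ≤ d + 1 := by
  obtain ⟨F, hF, hsub⟩ := exists_facet hK hσ
  calc σ.card ≤ F.card := Finset.card_le_card hsub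
    _ = d + 1 := hpure F hF

lemma facet_of_card (hK : IsComplex K) (hpure : IsPure K d) {σ : Finset V}
    (hσ : σ ∈ K) (hc : σ.card = d + 1) : σ ∈ facets K := by
  obtain ⟨F, hF, hsub⟩ := exists_facet hK hσ
  have : σ = F := Finset.eq_of_subset_of_card_le hsub (by rw [hpure F hF, hc])
  exact this ▸ hF

lemma facets_eq (hK : IsComplex K) (hpure : IsPure K d) :
    facets K = K.filter (fun σ => σ.card = d + 1) := by
  ext σ
  simp only [Finset.mem_filter]
  constructor
  · intro h
    exact ⟨facet_mem h, hpure σ h⟩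
  · rintro ⟨h1, h2⟩
    exact facet_of_card hK hpure h1 h2

lemma fnum_eq (hK : IsComplex K) (hpure : IsPure K d) :
    fNum K d = (facets K).card := by
  rw [fNum, facets_eq hK hpure]

/-- common neighbours of a non-adjacent pair form a clique -/
lemma clique_of_nonadj (hns : NoSquare K) {u v a b : V}
    (huv : ({u, v} : Finset V) ∉ K) (hnuv : u ≠ v) (hab : a ≠ b)
    (hua : u ≠ a) (hub : u ≠ b) (hva : v ≠ a) (hvb : v ≠ b)
    (hau : ({a, u} : Finset V) ∈ K) (hav : ({a, v} : Finset V) ∈ K)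
    (hbu : ({b, u} : Finset V) ∈ K) (hbv : ({b, v} : Finset V) ∈ K) :
    ({a, b} : Finset V) ∈ K := by
  by_contra hcon
  apply hns
  refine ⟨u, a, v, b, ?_, by rw [Finset.pair_comm u a]; exact hau, hav,
    by rw [Finset.pair_comm v b]; exact hbv, hbu, huv, hcon⟩
  · have h1 : u ∉ ({a, v, b} : Finset V) := by simp [hua, hnuv, hub]
    have h2 : a ∉ ({v, b} : Finset V) := by simp [hva.symm, hab]
    have h3 : v ∉ ({b} : Finset V) := by simp [hvb]
    rw [Finset.card_insert_of_notMem h1, Finset.card_insert_of_notMem h2,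
      Finset.card_insert_of_notMem h3, Finset.card_singleton]

end Basic
section Adj

variable {K : Finset (Finset V)} {d : ℕ}

lemma adjacent_facet (hK : IsComplex K) (hpure : IsPure K d) (hflag : IsFlag K)
    (hfree : NoFree K d) {F : Finset V} (hF : F ∈ facets K) {v : V} (hv : v ∈ F) :
    ∃ u, ({u, v} : Finset V) ∉ K ∧ u ∉ F ∧ insert u (F.erase v) ∈ facets K := by
  have hFK : F ∈ K := facet_mem hF
  have hFc : F.card = d + 1 := hpure F hF
  set σ := F.erase v with hσdef
  have hσK : σ ∈ K := subface_mem hK hFK (Finset.erase_subset _ _)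
  have hσc : σ.card = d := by rw [hσdef, Finset.card_erase_of_mem hv, hFc]; omega
  have h2 := hfree σ hσK hσc
  have hFmem : F ∈ (facets K).filter (fun G => σ ⊆ G) :=
    Finset.mem_filter.mpr ⟨hF, Finset.erase_subset _ _⟩
  obtain ⟨G, hGmem, hGF⟩ := Finset.exists_mem_ne (s := (facets K).filter (fun G => σ ⊆ G)) (by omega) F
  simp only [Finset.mem_filter] at hGmem
  obtain ⟨hGfac, hσG⟩ := hGmem
  have hGK : G ∈ K := facet_mem hGfac
  have hGc : G.card = d + 1 := hpure G hGfac
  have hsd : (G \ σ).card = 1 := by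
    rw [Finset.card_sdiff_of_subset hσG, hGc, hσc]; omega
  obtain ⟨u, hu⟩ := Finset.card_eq_one.mp hsd
  have huG : u ∈ G \ σ := hu ▸ Finset.mem_singleton_self u
  have huσ : u ∉ σ := (Finset.mem_sdiff.mp huG).2
  have hGeq : G = insert u σ := by
    have h1 : σ ∪ G \ σ = G := Finset.union_sdiff_of_subset hσG
    rw [hu] at h1
    rw [← h1, Finset.union_comm]; ext z; simp [Finset.mem_insert]
  have huv : u ≠ v := by
    intro h
    subst h
    rw [hGeq, hσdef, Finset.insert_erase hv] at hGF
    exact hGF rfl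
  have huF : u ∉ F := by
    intro h
    exact huσ (Finset.mem_erase.mpr ⟨huv, h⟩)
  refine ⟨u, ?_, huF, hGeq ▸ hGfac⟩
  intro hedge
  have hTK : insert v G ∈ K := by
    apply hflag
    · intro x hx
      rcases Finset.mem_insert.mp hx with h | h
      · exact h ▸ single_mem hK hFK hv
      · exact single_mem hK hGK h
    · intro x hx y hy hxy
      rcases Finset.mem_insert.mp hx with hx' | hx' <;>
        rcases Finset.mem_insert.mp hy with hy' | hy'
      · exact absurd (hx'.trans hy'.symm) hxy
      · subst hx'
        rcases Finset.mem_insert.mp (hGeq ▸ hy') with h | h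
        · subst h; rwa [Finset.pair_comm]
        · exact pair_mem hK hFK hv (Finset.mem_of_mem_erase h)
      · subst hy'
        rcases Finset.mem_insert.mp (hGeq ▸ hx') with h | h
        · subst h; exact hedge
        · exact pair_mem hK hFK (Finset.mem_of_mem_erase h) hv
      · exact pair_mem hK hGK hx' hy'
  have hvG : v ∉ G := by
    rw [hGeq]
    intro h
    rcases Finset.mem_insert.mp h with h | h
    · exact huv h.symm
    · exact (Finset.mem_erase.mp h).1 rfl
  have := face_card_le hK hpure hTK
  rw [Finset.card_insert_of_notMem hvG, hGc] at this
  omega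

lemma facets_eq_of_common (hK : IsComplex K) (hpure : IsPure K d) (hflag : IsFlag K)
    (hns : NoSquare K) {F F' : Finset V} (hF : F ∈ facets K) (hF' : F' ∈ facets K)
    {v : V} (hv : v ∈ F) (hv' : v ∈ F') {u : V} (huv : ({u, v} : Finset V) ∉ K)
    (hu : insert u (F.erase v) ∈ K) (hu' : insert u (F'.erase v) ∈ K) : F = F' := by
  by_contra hne
  have hFK := facet_mem hF
  have hF'K := facet_mem hF'
  have hunv : u ≠ v := by
    intro h
    subst h
    exact huv (by simpa using single_mem hK hFK hv)
  have hUK : F ∪ F' ∈ K := by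
    apply hflag
    · intro x hx
      rcases Finset.mem_union.mp hx with h | h
      · exact single_mem hK hFK h
      · exact single_mem hK hF'K h
    · intro x hx y hy hxy
      by_cases hxF : x ∈ F <;> by_cases hyF : y ∈ F
      · exact pair_mem hK hFK hxF hyF
      · -- x ∈ F, y ∈ F' \ F
        have hyF' : y ∈ F' := (Finset.mem_union.mp hy).resolve_left hyF
        by_cases hxF' : x ∈ F'
        · exact pair_mem hK hF'K hxF' hyF'
        · have hxv : x ≠ v := fun h => hxF' (h ▸ hv')
          have hyv : y ≠ v := fun h => hyF (h ▸ hv)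
          have hxu : ({x, u} : Finset V) ∈ K := by
            rw [Finset.pair_comm]
            exact pair_mem hK hu (Finset.mem_insert_self _ _)
              (Finset.mem_insert_of_mem (Finset.mem_erase.mpr ⟨hxv, hxF⟩))
          have hyu : ({y, u} : Finset V) ∈ K := by
            rw [Finset.pair_comm]
            exact pair_mem hK hu' (Finset.mem_insert_self _ _)
              (Finset.mem_insert_of_mem (Finset.mem_erase.mpr ⟨hyv, hyF'⟩))
          have hxvK : ({x, v} : Finset V) ∈ K := pair_mem hK hFK hxF hv
          have hyvK : ({y, v} : Finset V) ∈ K := pair_mem hK hF'K hyF' hv'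
          have hux : u ≠ x := fun h => huv (h ▸ hxvK)
          have huy : u ≠ y := fun h => huv (h ▸ hyvK)
          exact clique_of_nonadj hns huv hunv hxy hux huy (Ne.symm hxv) (Ne.symm hyv)
            hxu hxvK hyu hyvK
      · -- y ∈ F, x ∈ F' \ F : symmetric
        have hxF' : x ∈ F' := (Finset.mem_union.mp hx).resolve_left hxF
        have hxv : x ≠ v := fun h => hxF (h ▸ hv)
        by_cases hyv : y = v
        · subst hyv
          exact pair_mem hK hF'K hxF' hv'
        · have hxu : ({x, u} : Finset V) ∈ K := by
            rw [Finset.pair_comm]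
            exact pair_mem hK hu' (Finset.mem_insert_self _ _)
              (Finset.mem_insert_of_mem (Finset.mem_erase.mpr ⟨hxv, hxF'⟩))
          have hyu : ({y, u} : Finset V) ∈ K := by
            rw [Finset.pair_comm]
            exact pair_mem hK hu (Finset.mem_insert_self _ _)
              (Finset.mem_insert_of_mem (Finset.mem_erase.mpr ⟨hyv, hyF⟩))
          have hxvK : ({x, v} : Finset V) ∈ K := pair_mem hK hF'K hxF' hv'
          have hyvK : ({y, v} : Finset V) ∈ K := pair_mem hK hFK hyF hv
          have hux : u ≠ x := fun h => huv (h ▸ hxvK)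
          have huy : u ≠ y := fun h => huv (h ▸ hyvK)
          exact clique_of_nonadj hns huv hunv hxy hux huy (Ne.symm hxv) (Ne.symm hyv)
            hxu hxvK hyu hyvK
      · exact pair_mem hK hF'K ((Finset.mem_union.mp hx).resolve_left hxF)
          ((Finset.mem_union.mp hy).resolve_left hyF)
  have hssub : F ⊂ F ∪ F' := by
    refine Finset.ssubset_iff_subset_ne.mpr ⟨Finset.subset_union_left, ?_⟩
    intro h
    exact hne (Finset.eq_of_subset_of_card_le (h ▸ Finset.subset_union_right)
      (by rw [hpure F hF, hpure F' hF']) ).symm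
  have h1 := Finset.card_lt_card hssub
  have h2 := face_card_le hK hpure hUK
  rw [hpure F hF] at h1
  omega

end Adj
section Link

lemma card_le_three (x y z : V) : ({x, y, z} : Finset V).card ≤ 3 := by
  apply le_trans (Finset.card_insert_le _ _)
  have h1 : ({y, z} : Finset V).card ≤ 2 := by
    apply le_trans (Finset.card_insert_le _ _)
    simp
  omega

lemma card4_distinct {a b c d : V} (h : ({a, b, c, d} : Finset V).card = 4) :
    a ≠ b ∧ a ≠ c ∧ a ≠ d ∧ b ≠ c ∧ b ≠ d ∧ c ≠ d := by
  refine ⟨?_, ?_, ?_, ?_, ?_, ?_⟩ <;> intro heq <;> subst heq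
  · rw [show ({a, a, c, d} : Finset V) = {a, c, d} from by ext z; simp; try tauto] at h
    have := card_le_three a c d; omega
  · rw [show ({a, b, a, d} : Finset V) = {a, b, d} from by ext z; simp; try tauto] at h
    have := card_le_three a b d; omega
  · rw [show ({a, b, c, a} : Finset V) = {a, b, c} from by ext z; simp; try tauto] at h
    have := card_le_three a b c; omega
  · rw [show ({a, b, b, d} : Finset V) = {a, b, d} from by ext z; simp; try tauto] at h
    have := card_le_three a b d; omega
  · rw [show ({a, b, c, b} : Finset V) = {a, b, c} from by ext z; simp; try tauto] at h
    have := card_le_three a b c; omega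
  · rw [show ({a, b, c, c} : Finset V) = {a, b, c} from by ext z; simp; try tauto] at h
    have := card_le_three a b c; omega


variable {K : Finset (Finset V)} {e : ℕ} {w : V}

lemma mem_link {τ : Finset V} :
    τ ∈ link K {w} ↔ τ ∈ K ∧ w ∉ τ ∧ insert w τ ∈ K := by
  have h1 : τ ∩ {w} = ∅ ↔ w ∉ τ := by
    simp [Finset.eq_empty_iff_forall_notMem]
  have h2 : τ ∪ {w} = insert w τ := by ext z; simp [or_comm]
  rw [link, Finset.mem_filter, h2, and_congr_right_iff]
  intro _
  rw [h1]

lemma link_isComplex (hK : IsComplex K) (hw : ({w} : Finset V) ∈ K) :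
    IsComplex (link K {w}) := by
  constructor
  · rw [mem_link]
    exact ⟨hK.1, by simp, by simpa using hw⟩
  · intro σ hσ τ hτσ
    rw [mem_link] at hσ ⊢
    exact ⟨subface_mem hK hσ.1 hτσ, fun h => hσ.2.1 (hτσ h),
      subface_mem hK hσ.2.2 (Finset.insert_subset_insert _ hτσ)⟩

lemma link_facet_insert (hK : IsComplex K) {τ : Finset V}
    (hτ : τ ∈ facets (link K {w})) : w ∉ τ ∧ insert w τ ∈ facets K := by
  have hτl := facet_mem hτ
  rw [mem_link] at hτl
  obtain ⟨hτK, hwτ, hins⟩ := hτl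
  refine ⟨hwτ, Finset.mem_filter.mpr ⟨hins, ?_⟩⟩
  intro G hG hsub
  have hwG : w ∈ G := hsub (Finset.mem_insert_self _ _)
  have hGe : G.erase w ∈ link K {w} := by
    rw [mem_link]
    exact ⟨subface_mem hK hG (Finset.erase_subset _ _), Finset.notMem_erase _ _,
      by rwa [Finset.insert_erase hwG]⟩
  have hτsub : τ ⊆ G.erase w := by
    intro x hx
    exact Finset.mem_erase.mpr ⟨fun h => hwτ (h ▸ hx),
      hsub (Finset.mem_insert_of_mem hx)⟩
  have := facet_max hτ _ hGe hτsub
  rw [← this, Finset.insert_erase hwG]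

lemma erase_mem_link_facets (hK : IsComplex K) {G : Finset V}
    (hG : G ∈ facets K) (hwG : w ∈ G) : G.erase w ∈ facets (link K {w}) := by
  refine Finset.mem_filter.mpr ⟨?_, ?_⟩
  · rw [mem_link]
    exact ⟨subface_mem hK (facet_mem hG) (Finset.erase_subset _ _),
      Finset.notMem_erase _ _, by rw [Finset.insert_erase hwG]; exact facet_mem hG⟩
  · intro τ hτ hsub
    rw [mem_link] at hτ
    have hGsub : G ⊆ insert w τ := by
      intro x hx
      by_cases hxw : x = w
      · exact hxw ▸ Finset.mem_insert_self _ _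
      · exact Finset.mem_insert_of_mem (hsub (Finset.mem_erase.mpr ⟨hxw, hx⟩))
    have := facet_max hG _ hτ.2.2 hGsub
    rw [← this, Finset.erase_insert hτ.2.1]

lemma link_pure (hK : IsComplex K) (hpure : IsPure K (e + 1)) :
    IsPure (link K {w}) e := by
  intro τ hτ
  obtain ⟨hwτ, hins⟩ := link_facet_insert hK hτ
  have := hpure _ hins
  rw [Finset.card_insert_of_notMem hwτ] at this
  omega

lemma link_flag (hK : IsComplex K) (hflag : IsFlag K) (hw : ({w} : Finset V) ∈ K) :
    IsFlag (link K {w}) := by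
  intro τ h1 h2
  have hwτ : w ∉ τ := by
    intro h
    have := h1 w h
    rw [mem_link] at this
    simp at this
  have hsingle : ∀ x ∈ τ, ({x} : Finset V) ∈ K ∧ ({w, x} : Finset V) ∈ K := by
    intro x hx
    have := h1 x hx
    rw [mem_link] at this
    exact ⟨this.1, by simpa using this.2.2⟩
  have hins : insert w τ ∈ K := by
    apply hflag
    · intro x hx
      rcases Finset.mem_insert.mp hx with h | h
      · exact h ▸ hw
      · exact (hsingle x h).1
    · intro x hx y hy hxy
      rcases Finset.mem_insert.mp hx with hx' | hx' <;>
        rcases Finset.mem_insert.mp hy with hy' | hy'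
      · exact absurd (hx'.trans hy'.symm) hxy
      · exact hx' ▸ (hsingle y hy').2
      · rw [Finset.pair_comm]
        exact hy' ▸ (hsingle x hx').2
      · have := h2 x hx' y hy' hxy
        rw [mem_link] at this
        exact this.1
  rw [mem_link]
  exact ⟨subface_mem hK hins (Finset.subset_insert _ _), hwτ, hins⟩

lemma link_ns (hK : IsComplex K) (hflag : IsFlag K) (hns : NoSquare K) :
    NoSquare (link K {w}) := by
  rintro ⟨a, b, c, dd, hcard, e1, e2, e3, e4, n1, n2⟩
  rw [mem_link] at e1 e2 e3 e4
  have haw : a ≠ w := fun h => e1.2.1 (by simp [h])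
  have hbw : b ≠ w := fun h => e1.2.1 (by simp [h])
  have hcw : c ≠ w := fun h => e2.2.1 (by simp [h])
  have hdw : dd ≠ w := fun h => e3.2.1 (by simp [h])
  have hwpair : ∀ {x y : V}, insert w ({x, y} : Finset V) ∈ K → ({w, x} : Finset V) ∈ K :=
    fun h => pair_mem hK h (by simp) (by simp)
  have hwpair' : ∀ {x y : V}, insert w ({x, y} : Finset V) ∈ K → ({w, y} : Finset V) ∈ K :=
    fun h => pair_mem hK h (by simp) (by simp)
  have key : ∀ {x y : V}, x ≠ y → x ≠ w → y ≠ w →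
      ({w, x} : Finset V) ∈ K → ({w, y} : Finset V) ∈ K →
      ({x, y} : Finset V) ∈ K → ({x, y} : Finset V) ∈ link K {w} := by
    intro x y hxy hxw hyw h1' h2' h3'
    rw [mem_link]
    refine ⟨h3', by simp [Ne.symm hxw, Ne.symm hyw], ?_⟩
    apply hflag
    · intro z hz
      simp only [Finset.mem_insert, Finset.mem_singleton] at hz
      rcases hz with rfl | rfl | rfl
      · exact subface_mem hK h1' (by simp)
      · exact subface_mem hK h1' (by simp)
      · exact subface_mem hK h2' (by simp)
    · intro z1 hz1 z2 hz2 hne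
      simp only [Finset.mem_insert, Finset.mem_singleton] at hz1 hz2
      rcases hz1 with rfl | rfl | rfl <;> rcases hz2 with rfl | rfl | rfl <;>
        first
          | exact absurd rfl hne
          | assumption
          | (rw [Finset.pair_comm]; assumption)
  have hwa : ({w, a} : Finset V) ∈ K := hwpair e1.2.2
  have hwb : ({w, b} : Finset V) ∈ K := hwpair' e1.2.2
  have hwc : ({w, c} : Finset V) ∈ K := hwpair' e2.2.2
  have hwd : ({w, dd} : Finset V) ∈ K := hwpair' e3.2.2
  obtain ⟨d1, d2, d3, d4, d5, d6⟩ := card4_distinct hcard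
  have n1' : ({a, c} : Finset V) ∉ K := fun h => n1 (key d2 haw hcw hwa hwc h)
  have n2' : ({b, dd} : Finset V) ∉ K := fun h => n2 (key d5 hbw hdw hwb hwd h)
  exact hns ⟨a, b, c, dd, hcard, e1.1, e2.1, e3.1, e4.1, n1', n2'⟩

end Link
section Link2

variable {K : Finset (Finset V)} {e : ℕ} {w : V}

lemma link_nofree (hK : IsComplex K) (hfree : NoFree K (e + 1)) :
    NoFree (link K {w}) e := by
  intro σ hσ hcard
  rw [mem_link] at hσ
  obtain ⟨hσK, hwσ, hins⟩ := hσ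
  have hc : (insert w σ).card = e + 1 := by
    rw [Finset.card_insert_of_notMem hwσ, hcard]
  have h2 := hfree _ hins hc
  apply le_trans h2
  apply Finset.card_le_card_of_injOn (fun G => G.erase w)
  · intro G hG
    simp only [Finset.mem_coe, Finset.mem_filter] at hG ⊢
    have hwG : w ∈ G := hG.2 (Finset.mem_insert_self _ _)
    refine ⟨erase_mem_link_facets hK hG.1 hwG, ?_⟩
    intro x hx
    exact Finset.mem_erase.mpr ⟨fun h => hwσ (h ▸ hx), hG.2 (Finset.mem_insert_of_mem hx)⟩
  · intro G hG G' hG' heq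
    simp only [Finset.mem_coe, Finset.mem_filter] at hG hG'
    have hwG : w ∈ G := hG.2 (Finset.mem_insert_self _ _)
    have hwG' : w ∈ G' := hG'.2 (Finset.mem_insert_self _ _)
    simp only at heq
    rw [← Finset.insert_erase hwG, ← Finset.insert_erase hwG', heq]

lemma link_fnum (hK : IsComplex K) (hpure : IsPure K (e + 1)) :
    fNum (link K {w}) e = ((facets K).filter (fun F => w ∈ F)).card := by
  rw [fNum]
  apply Finset.card_bij (fun τ _ => insert w τ)
  · intro τ hτ
    simp only [Finset.mem_filter] at hτ ⊢
    obtain ⟨hτl, hτc⟩ := hτ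
    rw [mem_link] at hτl
    refine ⟨facet_of_card hK hpure hτl.2.2 ?_, Finset.mem_insert_self _ _⟩
    rw [Finset.card_insert_of_notMem hτl.2.1, hτc]
  · intro τ hτ τ' hτ' heq
    have h1 : w ∉ τ := by
      have := (Finset.mem_filter.mp hτ).1; rw [mem_link] at this; exact this.2.1
    have h2 : w ∉ τ' := by
      have := (Finset.mem_filter.mp hτ').1; rw [mem_link] at this; exact this.2.1
    rw [← Finset.erase_insert h1, ← Finset.erase_insert h2, heq]
  · intro F hF
    simp only [Finset.mem_filter] at hF
    refine ⟨F.erase w, ?_, Finset.insert_erase hF.2⟩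
    refine Finset.mem_filter.mpr ⟨facet_mem (erase_mem_link_facets hK hF.1 hF.2), ?_⟩
    rw [Finset.card_erase_of_mem hF.2, hpure F hF.1]
    omega

end Link2
section Five

variable {K : Finset (Finset V)}

lemma erase_mid {x y z : V} (h1 : y ≠ x) (h2 : y ≠ z) :
    ({x, y, z} : Finset V).erase y = {x, z} := by
  ext t
  simp only [Finset.mem_erase, Finset.mem_insert, Finset.mem_singleton]
  constructor
  · rintro ⟨ht, rfl | rfl | rfl⟩
    · exact Or.inl rfl
    · exact absurd rfl ht
    · exact Or.inr rfl
  · rintro (rfl | rfl)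
    · exact ⟨Ne.symm h1, Or.inl rfl⟩
    · exact ⟨Ne.symm h2, Or.inr (Or.inr rfl)⟩

lemma erase_last {x y z : V} (h1 : z ≠ x) (h2 : z ≠ y) :
    ({x, y, z} : Finset V).erase z = {x, y} := by
  ext t
  simp only [Finset.mem_erase, Finset.mem_insert, Finset.mem_singleton]
  constructor
  · rintro ⟨ht, rfl | rfl | rfl⟩
    · exact Or.inl rfl
    · exact Or.inr rfl
    · exact absurd rfl ht
  · rintro (rfl | rfl)
    · exact ⟨Ne.symm h1, Or.inl rfl⟩
    · exact ⟨Ne.symm h2, Or.inr (Or.inl rfl)⟩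

lemma card4_of_distinct {a b c d : V} (h1 : a ≠ b) (h2 : a ≠ c) (h3 : a ≠ d)
    (h4 : b ≠ c) (h5 : b ≠ d) (h6 : c ≠ d) : ({a, b, c, d} : Finset V).card = 4 := by
  have ha : a ∉ ({b, c, d} : Finset V) := by simp [h1, h2, h3]
  have hb : b ∉ ({c, d} : Finset V) := by simp [h4, h5]
  have hc : c ∉ ({d} : Finset V) := by simp [h6]
  rw [Finset.card_insert_of_notMem ha, Finset.card_insert_of_notMem hb,
    Finset.card_insert_of_notMem hc, Finset.card_singleton]

lemma ne_of_wit {s t : Finset V} {z : V} (hz : z ∈ s) (hz' : z ∉ t) : s ≠ t :=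
  fun h => hz' (h ▸ hz)

lemma five (hK : IsComplex K) (hpure : IsPure K 2) (hflag : IsFlag K)
    (hns : NoSquare K) (hfree : NoFree K 2) {v : V} (hv : ({v} : Finset V) ∈ K) :
    5 ≤ ((facets K).filter (fun F => v ∈ F)).card := by
  obtain ⟨F₁, hF₁, hvsub⟩ := exists_facet hK hv
  have hv1 : v ∈ F₁ := hvsub (Finset.mem_singleton_self v)
  have hF₁c : F₁.card = 3 := hpure F₁ hF₁
  have hEc : (F₁.erase v).card = 2 := by
    rw [Finset.card_erase_of_mem hv1, hF₁c]
  obtain ⟨a, b, hab, hE⟩ := Finset.card_eq_two.mp hEc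
  have haE : a ∈ F₁.erase v := by rw [hE]; simp
  have hbE : b ∈ F₁.erase v := by rw [hE]; simp
  have hav : a ≠ v := (Finset.mem_erase.mp haE).1
  have hbv : b ≠ v := (Finset.mem_erase.mp hbE).1
  have hF₁eq : F₁ = {v, a, b} := by
    rw [← Finset.insert_erase hv1, hE]
  rw [hF₁eq] at hF₁
  clear hvsub hv1 hEc haE hbE hF₁eq hF₁c
  have hs1K : ({v, a, b} : Finset V) ∈ K := facet_mem hF₁
  -- T2 across b
  obtain ⟨b', hb'nb, hb'T1, hT2⟩ := adjacent_facet hK hpure hflag hfree hF₁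
    (show b ∈ ({v, a, b} : Finset V) by simp)
  rw [erase_last hbv (Ne.symm hab)] at hT2
  have hT2 : ({b', v, a} : Finset V) ∈ facets K := hT2
  have hs2K := facet_mem hT2
  have hb'v : b' ≠ v := fun h => hb'T1 (by simp [h])
  have hb'a : b' ≠ a := fun h => hb'T1 (by simp [h])
  have hb'b : b' ≠ b := fun h => hb'T1 (by simp [h])
  -- T3 across a
  obtain ⟨c, hcna, hcT1, hT3⟩ := adjacent_facet hK hpure hflag hfree hF₁
    (show a ∈ ({v, a, b} : Finset V) by simp)
  rw [erase_mid hav hab] at hT3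
  have hT3 : ({c, v, b} : Finset V) ∈ facets K := hT3
  have hs3K := facet_mem hT3
  have hcv : c ≠ v := fun h => hcT1 (by simp [h])
  have hca : c ≠ a := fun h => hcT1 (by simp [h])
  have hcb : c ≠ b := fun h => hcT1 (by simp [h])
  -- T4 across a on T2
  obtain ⟨c', hc'na, hc'T2, hT4⟩ := adjacent_facet hK hpure hflag hfree hT2
    (show a ∈ ({b', v, a} : Finset V) by simp)
  rw [erase_last (Ne.symm hb'a) hav] at hT4
  have hT4 : ({c', b', v} : Finset V) ∈ facets K := hT4
  have hs4K := facet_mem hT4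
  have hc'b' : c' ≠ b' := fun h => hc'T2 (by simp [h])
  have hc'v : c' ≠ v := fun h => hc'T2 (by simp [h])
  have hc'a : c' ≠ a := fun h => hc'T2 (by simp [h])
  -- T5 across b on T3
  obtain ⟨x, hxnb, hxT3, hT5⟩ := adjacent_facet hK hpure hflag hfree hT3
    (show b ∈ ({c, v, b} : Finset V) by simp)
  rw [erase_last (Ne.symm hcb) hbv] at hT5
  have hT5 : ({x, c, v} : Finset V) ∈ facets K := hT5
  have hs5K := facet_mem hT5
  have hxc : x ≠ c := fun h => hxT3 (by simp [h])
  have hxv : x ≠ v := fun h => hxT3 (by simp [h])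
  have hxb : x ≠ b := fun h => hxT3 (by simp [h])
  -- extra distinctness
  have hcb' : c ≠ b' := fun h =>
    hb'nb (h ▸ pair_mem hK hs3K (by simp) (by simp : b ∈ ({c, v, b} : Finset V)))
  have hc'b : c' ≠ b := by
    intro h
    apply hb'nb
    rw [Finset.pair_comm]
    exact h ▸ pair_mem hK hs4K (by simp) (by simp : b' ∈ ({c', b', v} : Finset V))
  have hxb' : x ≠ b' := by
    intro h
    apply hns
    refine ⟨a, b, c, b', card4_of_distinct hab (Ne.symm hca) (Ne.symm hb'a)
      (Ne.symm hcb) (Ne.symm hb'b) hcb', ?_, ?_, ?_, ?_, ?_, ?_⟩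
    · exact pair_mem hK hs1K (by simp) (by simp)
    · rw [Finset.pair_comm]
      exact pair_mem hK hs3K (by simp) (by simp)
    · rw [← h]
      rw [Finset.pair_comm]
      exact pair_mem hK hs5K (by simp) (by simp)
    · exact pair_mem hK hs2K (by simp) (by simp)
    · intro hmem
      apply hcna
      rwa [Finset.pair_comm]
    · intro hmem
      apply hb'nb
      rwa [Finset.pair_comm]
  -- the five facets
  have ne12 : ({v, a, b} : Finset V) ≠ {b', v, a} :=
    ne_of_wit (by simp : b ∈ ({v, a, b} : Finset V)) (by simp [Ne.symm hb'b, hbv, Ne.symm hab])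
  have ne13 : ({v, a, b} : Finset V) ≠ {c, v, b} :=
    ne_of_wit (by simp : a ∈ ({v, a, b} : Finset V)) (by simp [Ne.symm hca, hav, hab])
  have ne14 : ({v, a, b} : Finset V) ≠ {c', b', v} :=
    ne_of_wit (by simp : a ∈ ({v, a, b} : Finset V)) (by simp [Ne.symm hc'a, Ne.symm hb'a, hav])
  have ne15 : ({v, a, b} : Finset V) ≠ {x, c, v} :=
    ne_of_wit (by simp : b ∈ ({v, a, b} : Finset V)) (by simp [Ne.symm hxb, Ne.symm hcb, hbv])
  have ne23 : ({b', v, a} : Finset V) ≠ {c, v, b} :=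
    ne_of_wit (by simp : a ∈ ({b', v, a} : Finset V)) (by simp [Ne.symm hca, hav, hab])
  have ne24 : ({b', v, a} : Finset V) ≠ {c', b', v} :=
    ne_of_wit (by simp : a ∈ ({b', v, a} : Finset V)) (by simp [Ne.symm hc'a, Ne.symm hb'a, hav])
  have ne25 : ({b', v, a} : Finset V) ≠ {x, c, v} :=
    ne_of_wit (by simp : b' ∈ ({b', v, a} : Finset V)) (by simp [Ne.symm hxb', Ne.symm hcb', hb'v])
  have ne34 : ({c, v, b} : Finset V) ≠ {c', b', v} :=
    ne_of_wit (by simp : b ∈ ({c, v, b} : Finset V)) (by simp [Ne.symm hc'b, Ne.symm hb'b, hbv])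
  have ne35 : ({c, v, b} : Finset V) ≠ {x, c, v} :=
    ne_of_wit (by simp : b ∈ ({c, v, b} : Finset V)) (by simp [Ne.symm hxb, Ne.symm hcb, hbv])
  have ne45 : ({c', b', v} : Finset V) ≠ {x, c, v} :=
    ne_of_wit (by simp : b' ∈ ({c', b', v} : Finset V)) (by simp [Ne.symm hxb', Ne.symm hcb', hb'v])
  set S : Finset (Finset V) :=
    {({v, a, b} : Finset V), {b', v, a}, {c, v, b}, {c', b', v}, {x, c, v}} with hS
  have hSsub : S ⊆ (facets K).filter (fun F => v ∈ F) := by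
    intro T hT
    rw [hS] at hT
    simp only [Finset.mem_insert, Finset.mem_singleton] at hT
    rcases hT with rfl | rfl | rfl | rfl | rfl <;>
      exact Finset.mem_filter.mpr ⟨by assumption, by simp⟩
  have hScard : S.card = 5 := by
    rw [hS]
    rw [Finset.card_insert_of_notMem (by simp [ne12, ne13, ne14, ne15]),
      Finset.card_insert_of_notMem (by simp [ne23, ne24, ne25]),
      Finset.card_insert_of_notMem (by simp [ne34, ne35]),
      Finset.card_insert_of_notMem (by simp [ne45]),
      Finset.card_singleton]
  calc 5 = S.card := hScard.symm
    _ ≤ _ := Finset.card_le_card hSsub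

end Five
section Base

variable {K : Finset (Finset V)}

lemma base_count (hK : IsComplex K) (hpure : IsPure K 2) (hflag : IsFlag K)
    (hns : NoSquare K) (hfree : NoFree K 2) : 13 ≤ fNum K 2 := by
  obtain ⟨F₁, hF₁, -⟩ := exists_facet hK hK.1
  have hF₁c : F₁.card = 3 := hpure F₁ hF₁
  obtain ⟨v, hvF₁⟩ := Finset.card_pos.mp (by omega : 0 < F₁.card)
  have hv : ({v} : Finset V) ∈ K := single_mem hK (facet_mem hF₁) hvF₁
  set A := (facets K).filter (fun F => v ∈ F) with hA
  have hA5 : 5 ≤ A.card := five hK hpure hflag hns hfree hv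
  have hchoice : ∀ F ∈ A, ∃ u, ({u, v} : Finset V) ∉ K ∧ u ∉ F ∧
      insert u (F.erase v) ∈ facets K := by
    intro F hF
    exact adjacent_facet hK hpure hflag hfree (Finset.mem_filter.mp hF).1
      (Finset.mem_filter.mp hF).2
  choose uf0 hu1' hu2' hu3' using hchoice
  have hvdflt : V := v
  set uf : Finset V → V := fun F => if h : F ∈ A then uf0 F h else v with hufdef
  have hu1 : ∀ F ∈ A, ({uf F, v} : Finset V) ∉ K := by
    intro F hF; simp only [hufdef, dif_pos hF]; exact hu1' F hF
  have hu2 : ∀ F ∈ A, uf F ∉ F := by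
    intro F hF; simp only [hufdef, dif_pos hF]; exact hu2' F hF
  have hu3 : ∀ F ∈ A, insert (uf F) (F.erase v) ∈ facets K := by
    intro F hF; simp only [hufdef, dif_pos hF]; exact hu3' F hF
  have hF₁A : F₁ ∈ A := Finset.mem_filter.mpr ⟨hF₁, hvF₁⟩
  set u := uf F₁ with hudef
  have huvK : ({u, v} : Finset V) ∉ K := hu1 F₁ hF₁A
  have hG₁ : insert u (F₁.erase v) ∈ facets K := hu3 F₁ hF₁A
  have huK : ({u} : Finset V) ∈ K :=
    single_mem hK (facet_mem hG₁) (Finset.mem_insert_self _ _)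
  have huv : u ≠ v := by
    intro h
    apply huvK
    rw [h]
    simpa using hv
  -- injectivity of chosen opposite vertices
  have hufinj : ∀ F ∈ A, ∀ F' ∈ A, uf F = uf F' → F = F' := by
    intro F hFA F' hF'A hequ
    have hFf := (Finset.mem_filter.mp hFA).1
    have hF'f := (Finset.mem_filter.mp hF'A).1
    exact facets_eq_of_common hK hpure hflag hns hFf hF'f
      (Finset.mem_filter.mp hFA).2 (Finset.mem_filter.mp hF'A).2 (hu1 F hFA)
      (facet_mem (hu3 F hFA)) (by rw [hequ]; exact facet_mem (hu3 F' hF'A))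
  -- the adjacent facet to F across v determines F
  have hGinj : ∀ F ∈ A, ∀ F' ∈ A,
      insert (uf F) (F.erase v) = insert (uf F') (F'.erase v) → F = F' := by
    intro F hFA F' hF'A heq
    apply hufinj F hFA F' hF'A
    have h1 : uf F ∈ insert (uf F') (F'.erase v) := heq ▸ Finset.mem_insert_self _ _
    rcases Finset.mem_insert.mp h1 with h | h
    · exact h
    · exfalso
      apply hu1 F hFA
      exact pair_mem hK (facet_mem (Finset.mem_filter.mp hF'A).1)
        (Finset.mem_of_mem_erase h) (Finset.mem_filter.mp hF'A).2
  set B := A.attach.image (fun F => insert (uf F.1) (F.1.erase v)) with hB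
  have hBcard : B.card = A.card := by
    rw [hB, Finset.card_image_of_injOn, Finset.card_attach]
    intro F _ F' _ heq
    exact Subtype.ext (hGinj F.1 F.2 F'.1 F'.2 heq)
  -- members of B are facets not containing v
  have hBfacts : ∀ G ∈ B, G ∈ facets K ∧ v ∉ G ∧ (u ∈ G → G = insert u (F₁.erase v)) := by
    intro G hG
    rw [hB, Finset.mem_image] at hG
    obtain ⟨F, -, hFeq⟩ := hG
    have hFA := F.2
    refine ⟨hFeq ▸ hu3 F.1 hFA, ?_, ?_⟩
    · rw [← hFeq]
      intro hvmem
      rcases Finset.mem_insert.mp hvmem with h | h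
      · apply hu1 F.1 hFA
        rw [← h]
        simpa using single_mem hK (facet_mem (Finset.mem_filter.mp hFA).1)
          (Finset.mem_filter.mp hFA).2
      · exact (Finset.mem_erase.mp h).1 rfl
    · intro huG
      rw [← hFeq] at huG ⊢
      rcases Finset.mem_insert.mp huG with h | h
      · have : F.1 = F₁ := hufinj F.1 hFA F₁ hF₁A (by rw [← h])
        rw [this]
      · exfalso
        apply huvK
        exact pair_mem hK (facet_mem (Finset.mem_filter.mp hFA).1)
          (Finset.mem_of_mem_erase h) (Finset.mem_filter.mp hFA).2
  set C := ((facets K).filter (fun F => u ∈ F)).erase (insert u (F₁.erase v)) with hC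
  have hC4 : 4 ≤ C.card := by
    have h5 : 5 ≤ ((facets K).filter (fun F => u ∈ F)).card :=
      five hK hpure hflag hns hfree huK
    have h := Finset.pred_card_le_card_erase
      (s := (facets K).filter (fun F => u ∈ F)) (a := insert u (F₁.erase v))
    rw [hC]
    omega
  -- disjointness
  have hdAB : Disjoint A B := by
    rw [Finset.disjoint_left]
    intro G hGA hGB
    exact (hBfacts G hGB).2.1 (Finset.mem_filter.mp hGA).2
  have hdAC : Disjoint A C := by
    rw [Finset.disjoint_left]
    intro G hGA hGC
    have hGC0 := Finset.mem_of_mem_erase hGC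
    apply huvK
    exact pair_mem hK (facet_mem (Finset.mem_filter.mp hGA).1)
      (Finset.mem_filter.mp hGC0).2 (Finset.mem_filter.mp hGA).2
  have hdBC : Disjoint B C := by
    rw [Finset.disjoint_left]
    intro G hGB hGC
    have hGC0 := Finset.mem_of_mem_erase hGC
    have huG : u ∈ G := (Finset.mem_filter.mp hGC0).2
    have := (hBfacts G hGB).2.2 huG
    exact (Finset.mem_erase.mp hGC).1 this
  have hsub : A ∪ B ∪ C ⊆ facets K := by
    intro G hG
    rcases Finset.mem_union.mp hG with h | h
    · rcases Finset.mem_union.mp h with h' | h'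
      · exact (Finset.mem_filter.mp h').1
      · exact (hBfacts G h').1
    · exact (Finset.mem_filter.mp (Finset.mem_of_mem_erase h)).1
  have hcards : (A ∪ B ∪ C).card = A.card + B.card + C.card := by
    rw [Finset.card_union_of_disjoint, Finset.card_union_of_disjoint hdAB]
    rw [Finset.disjoint_union_left]
    exact ⟨hdAC, hdBC⟩
  have hle := Finset.card_le_card hsub
  rw [fnum_eq hK hpure]
  omega

end Base

theorem aux_bound : ∀ d : ℕ, 2 ≤ d → ∀ K : Finset (Finset V), IsComplex K →
    IsPure K d → IsFlag K → NoSquare K → NoFree K d →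
    ((d : ℝ) + 4) * ((25 : ℝ) / 12) ^ 2 ^ (d - 2) ≤ (fNum K d : ℝ) := by
  intro d hd
  induction d, hd using Nat.le_induction with
  | base =>
    intro K hK hpure hflag hns hfree
    have h13 := base_count hK hpure hflag hns hfree
    have h13' : (13 : ℝ) ≤ (fNum K 2 : ℝ) := by exact_mod_cast h13
    norm_num
    linarith
  | succ e he IH =>
    intro K hK hpure hflag hns hfree
    -- bound on number of facets through any vertex, from the link
    have hm : ∀ w : V, ({w} : Finset V) ∈ K →
        ((e : ℝ) + 4) * ((25 : ℝ) / 12) ^ 2 ^ (e - 2) ≤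
          (((facets K).filter (fun F => w ∈ F)).card : ℝ) := by
      intro w hw
      have h1 := IH (link K {w}) (link_isComplex hK hw) (link_pure hK hpure)
        (link_flag hK hflag hw) (link_ns hK hflag hns) (link_nofree hK hfree)
      rwa [link_fnum hK hpure] at h1
    obtain ⟨F₀, hF₀, -⟩ := exists_facet hK hK.1
    have hF₀c : F₀.card = e + 2 := hpure F₀ hF₀
    obtain ⟨v, hvF₀⟩ := Finset.card_pos.mp (by omega : 0 < F₀.card)
    have hv : ({v} : Finset V) ∈ K := single_mem hK (facet_mem hF₀) hvF₀
    set A := (facets K).filter (fun F => v ∈ F) with hA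
    have hchoice : ∀ F ∈ A, ∃ u, ({u, v} : Finset V) ∉ K ∧ u ∉ F ∧
        insert u (F.erase v) ∈ facets K := by
      intro F hF
      exact adjacent_facet hK hpure hflag hfree (Finset.mem_filter.mp hF).1
        (Finset.mem_filter.mp hF).2
    choose uf0 hu1' hu2' hu3' using hchoice
    set uf : Finset V → V := fun F => if h : F ∈ A then uf0 F h else v with hufdef
    have hu1 : ∀ F ∈ A, ({uf F, v} : Finset V) ∉ K := by
      intro F hF; simp only [hufdef, dif_pos hF]; exact hu1' F hF
    have hu3 : ∀ F ∈ A, insert (uf F) (F.erase v) ∈ facets K := by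
      intro F hF; simp only [hufdef, dif_pos hF]; exact hu3' F hF
    have hufinj : ∀ F ∈ A, ∀ F' ∈ A, uf F = uf F' → F = F' := by
      intro F hFA F' hF'A hequ
      exact facets_eq_of_common hK hpure hflag hns (Finset.mem_filter.mp hFA).1
        (Finset.mem_filter.mp hF'A).1 (Finset.mem_filter.mp hFA).2
        (Finset.mem_filter.mp hF'A).2 (hu1 F hFA) (facet_mem (hu3 F hFA))
        (by rw [hequ]; exact facet_mem (hu3 F' hF'A))
    have hufK : ∀ F ∈ A, ({uf F} : Finset V) ∈ K := by
      intro F hF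
      exact single_mem hK (facet_mem (hu3 F hF)) (Finset.mem_insert_self _ _)
    -- the double count
    have key1 : ∀ G ∈ facets K, (A.attach.filter (fun F => uf F.1 ∈ G)).card ≤ e + 2 := by
      intro G hG
      have h1 : (A.attach.filter (fun F => uf F.1 ∈ G)).card ≤ G.card := by
        apply Finset.card_le_card_of_injOn (fun F => uf F.1)
        · intro F hF
          exact (Finset.mem_filter.mp hF).2
        · intro F hF F' hF' heq
          have hFm := (Finset.mem_filter.mp (Finset.mem_coe.mp hF)).1
          have hF'm := (Finset.mem_filter.mp (Finset.mem_coe.mp hF')).1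
          exact Subtype.ext (hufinj F.1 F.2 F'.1 F'.2 heq)
      rw [hpure G hG] at h1
      exact h1
    have hswap : ∑ F ∈ A.attach, ((facets K).filter (fun G => uf F.1 ∈ G)).card
        = ∑ G ∈ facets K, (A.attach.filter (fun F => uf F.1 ∈ G)).card := by
      simp_rw [Finset.card_filter]
      rw [Finset.sum_comm]
    have hupper : ∑ F ∈ A.attach, ((facets K).filter (fun G => uf F.1 ∈ G)).card
        ≤ (facets K).card * (e + 2) := by
      rw [hswap]
      calc ∑ G ∈ facets K, (A.attach.filter (fun F => uf F.1 ∈ G)).card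
          ≤ ∑ G ∈ facets K, (e + 2) := Finset.sum_le_sum key1
        _ = (facets K).card * (e + 2) := by rw [Finset.sum_const, smul_eq_mul]
    set Be : ℝ := ((25 : ℝ) / 12) ^ 2 ^ (e - 2) with hBe
    have hBepos : (0 : ℝ) < Be := by positivity
    have hlower : ((A.card : ℝ)) * (((e : ℝ) + 4) * Be) ≤
        ∑ F ∈ A.attach, (((facets K).filter (fun G => uf F.1 ∈ G)).card : ℝ) := by
      have h1 : ∀ F ∈ A.attach, ((e : ℝ) + 4) * Be ≤
          (((facets K).filter (fun G => uf F.1 ∈ G)).card : ℝ) := by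
        intro F _
        exact hm (uf F.1) (hufK F.1 F.2)
      calc ((A.card : ℝ)) * (((e : ℝ) + 4) * Be)
          = ∑ _F ∈ A.attach, ((e : ℝ) + 4) * Be := by
            rw [Finset.sum_const, Finset.card_attach, nsmul_eq_mul]
        _ ≤ _ := Finset.sum_le_sum h1
    have hAcard : ((e : ℝ) + 4) * Be ≤ (A.card : ℝ) := hm v hv
    have hupper' : (∑ F ∈ A.attach, (((facets K).filter (fun G => uf F.1 ∈ G)).card : ℝ))
        ≤ ((facets K).card : ℝ) * ((e : ℝ) + 2) := by
      have := hupper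
      push_cast
      exact_mod_cast this
    have hmain : (((e : ℝ) + 4) * Be) ^ 2 ≤ ((facets K).card : ℝ) * ((e : ℝ) + 2) := by
      have h0 : (0 : ℝ) ≤ ((e : ℝ) + 4) * Be := by positivity
      nlinarith [hlower, hAcard, hupper']
    -- convert to the goal
    have hfnum : (fNum K (e + 1) : ℝ) = ((facets K).card : ℝ) := by
      rw [fnum_eq hK hpure]
    have hexp : (2 : ℕ) ^ (e + 1 - 2) = 2 ^ (e - 2) * 2 := by
      have : e + 1 - 2 = (e - 2) + 1 := by omega
      rw [this, pow_succ]
    have hBe2 : ((25 : ℝ) / 12) ^ 2 ^ (e + 1 - 2) = Be ^ 2 := by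
      rw [hexp, pow_mul, hBe]
    rw [hBe2, hfnum]
    push_cast
    nlinarith [hmain, sq_nonneg Be, hBepos, (by exact_mod_cast Nat.zero_le e : (0:ℝ) ≤ (e:ℝ))]


/-- A pure `d`-dimensional (`d ≥ 2`) flag-no-square simplicial complex with no
free `(d-1)`-faces has more than `(25/12) ^ (2 ^ (d-2))` facets. -/
theorem facets_lower_bound {V : Type} [DecidableEq V] [Fintype V]
    (d : ℕ) (hd : 2 ≤ d) (K : Finset (Finset V))
    (hK : IsComplex K) (hvert : ∀ v : V, ({v} : Finset V) ∈ K)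
    (hpure : IsPure K d) (hflag : IsFlag K) (hns : NoSquare K)
    (hfree : NoFree K d) :
    ((25 : ℝ) / 12) ^ 2 ^ (d - 2) < (fNum K d : ℝ) := by
  have h := aux_bound d hd K hK hpure hflag hns hfree
  have hBpos : (0 : ℝ) < ((25 : ℝ) / 12) ^ 2 ^ (d - 2) := by positivity
  have hd4 : (6 : ℝ) ≤ (d : ℝ) + 4 := by
    have : (2 : ℝ) ≤ (d : ℝ) := by exact_mod_cast hd
    linarith
  nlinarith [h, hBpos, hd4]
end

section
/- Let d ≥ 3 and let Δ be a pure d-dimensional flag-no-square simplicial complex in which every (d−1)-dimensional face is contained in at least two facets (no free (d−1)-faces). Then the number of vertices satisfies f_0(Δ) > (25/12)^{2^{d−3}}. -/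
open Finset

variable {V : Type} [DecidableEq V] [Fintype V]

namespace FNS

variable {V : Type} [DecidableEq V] [Fintype V]

/-- number of vertices of the link of `σ`. -/
def vcnt (K : Finset (Finset V)) (σ : Finset V) : ℕ :=
  (univ.filter fun v => v ∉ σ ∧ insert v σ ∈ K).card

/-- number of facets containing `σ`. -/
def fcnt (K : Finset (Finset V)) (σ : Finset V) : ℕ :=
  ((facets K).filter fun F => σ ⊆ F).card

lemma pair_mem {K : Finset (Finset V)} (hK : IsComplex K) {S : Finset V} (hS : S ∈ K)
    {x y : V} (hx : x ∈ S) (hy : y ∈ S) : ({x, y} : Finset V) ∈ K := by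
  refine hK.2 S hS _ ?_
  intro z hz
  rcases mem_insert.mp hz with rfl | hz
  · exact hx
  · rw [mem_singleton.mp hz]; exact hy

lemma facet_mem {K : Finset (Finset V)} {F : Finset V} (hF : F ∈ facets K) : F ∈ K :=
  (mem_filter.mp hF).1

lemma facet_max {K : Finset (Finset V)} {F : Finset V} (hF : F ∈ facets K) :
    ∀ τ ∈ K, F ⊆ τ → τ = F :=
  (mem_filter.mp hF).2

lemma exists_facet {K : Finset (Finset V)} (hK : IsComplex K) {σ : Finset V} (hσ : σ ∈ K) :
    ∃ F ∈ facets K, σ ⊆ F := by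
  obtain ⟨F, hFmem, hFmax⟩ := (K.filter fun τ => σ ⊆ τ).exists_max_image Finset.card
    ⟨σ, mem_filter.mpr ⟨hσ, subset_rfl⟩⟩
  have hFK : F ∈ K := (mem_filter.mp hFmem).1
  have hσF : σ ⊆ F := (mem_filter.mp hFmem).2
  refine ⟨F, mem_filter.mpr ⟨hFK, ?_⟩, hσF⟩
  intro τ hτ hFτ
  exact (eq_of_subset_of_card_le hFτ (hFmax τ (mem_filter.mpr ⟨hτ, hσF.trans hFτ⟩))).symm

lemma card_face_le {K : Finset (Finset V)} {d : ℕ} (hK : IsComplex K) (hpure : IsPure K d)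
    {τ : Finset V} (hτ : τ ∈ K) : τ.card ≤ d + 1 := by
  obtain ⟨F, hF, hsub⟩ := exists_facet hK hτ
  calc τ.card ≤ F.card := card_le_card hsub
    _ = d + 1 := hpure F hF

/-- Given a facet `F` and `v₀ ∈ F`, there is a second extension `w` of the ridge
`F.erase v₀`; such a `w` is never joined to `v₀`. -/
lemma second_ext {K : Finset (Finset V)} {d : ℕ} (hK : IsComplex K)
    (hvert : ∀ v : V, ({v} : Finset V) ∈ K) (hpure : IsPure K d) (hflag : IsFlag K)
    (hfree : NoFree K d) {F : Finset V} (hF : F ∈ facets K) {v₀ : V} (hv₀ : v₀ ∈ F) :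
    ∃ w : V, w ∉ F ∧ ({v₀, w} : Finset V) ∉ K ∧ insert w (F.erase v₀) ∈ K := by
  have hFK : F ∈ K := facet_mem hF
  have hRK : F.erase v₀ ∈ K := hK.2 F hFK _ (erase_subset _ _)
  have hFcard : F.card = d + 1 := hpure F hF
  have hRcard : (F.erase v₀).card = d := by
    rw [card_erase_of_mem hv₀, hFcard]
    omega
  have h2 : 2 ≤ ((facets K).filter fun G => F.erase v₀ ⊆ G).card := hfree _ hRK hRcard
  obtain ⟨G, hGmem, hGF⟩ := Finset.exists_mem_ne
    (s := (facets K).filter fun G => F.erase v₀ ⊆ G) (by omega) F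
  have hGfac : G ∈ facets K := (mem_filter.mp hGmem).1
  have hRG : F.erase v₀ ⊆ G := (mem_filter.mp hGmem).2
  have hGK : G ∈ K := facet_mem hGfac
  have hGcard : G.card = d + 1 := hpure G hGfac
  have hv₀G : v₀ ∉ G := by
    intro h
    refine hGF (facet_max hF G hGK ?_)
    intro x hx
    rcases eq_or_ne x v₀ with rfl | hxv
    · exact h
    · exact hRG (mem_erase.mpr ⟨hxv, hx⟩)
  have hcard1 : (G \ F.erase v₀).card = 1 := by
    rw [card_sdiff_of_subset hRG, hGcard, hRcard]; omega
  obtain ⟨w, hw⟩ := card_eq_one.mp hcard1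
  have hwGR : w ∈ G \ F.erase v₀ := hw ▸ mem_singleton_self w
  have hwG : w ∈ G := (mem_sdiff.mp hwGR).1
  have hwR : w ∉ F.erase v₀ := (mem_sdiff.mp hwGR).2
  have hGeq : G = insert w (F.erase v₀) := by
    have h := sdiff_union_of_subset hRG
    rw [hw] at h
    rw [← h, insert_eq]
  have hwv₀ : w ≠ v₀ := fun h => hv₀G (h ▸ hwG)
  have hwF : w ∉ F := fun h => hwR (mem_erase.mpr ⟨hwv₀, h⟩)
  refine ⟨w, hwF, ?_, hGeq ▸ hGK⟩
  intro hvw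
  have hbig : insert v₀ G ∈ K := by
    apply hflag
    · intro u _; exact hvert u
    · intro a ha b hb hab
      rcases mem_insert.mp ha with hav | haG
      · rcases mem_insert.mp hb with hbv | hbG
        · exact absurd (hav.trans hbv.symm) hab
        · rw [hav]
          rcases mem_insert.mp (hGeq ▸ hbG : b ∈ insert w (F.erase v₀)) with hbw | hbR
          · rw [hbw]; exact hvw
          · exact pair_mem hK hFK hv₀ (mem_of_mem_erase hbR)
      · rcases mem_insert.mp hb with hbv | hbG
        · rw [hbv, pair_comm]
          rcases mem_insert.mp (hGeq ▸ haG : a ∈ insert w (F.erase v₀)) with haw | haR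
          · rw [haw]; exact hvw
          · exact pair_mem hK hFK hv₀ (mem_of_mem_erase haR)
        · exact pair_mem hK hGK haG hbG
  have hle : (insert v₀ G).card ≤ d + 1 := card_face_le hK hpure hbig
  rw [card_insert_of_notMem hv₀G, hGcard] at hle
  omega

/-- The second-extension vertex determines the facet (flag + no-square argument). -/
lemma ext_unique {K : Finset (Finset V)} {d : ℕ} (hK : IsComplex K)
    (hvert : ∀ v : V, ({v} : Finset V) ∈ K) (hpure : IsPure K d) (hflag : IsFlag K)
    (hns : NoSquare K) {F F' : Finset V} (hF : F ∈ facets K) (hF' : F' ∈ facets K)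
    {v₀ w : V} (hv₀F : v₀ ∈ F) (hv₀F' : v₀ ∈ F')
    (hwF : w ∉ F) (hwF' : w ∉ F') (hvw : ({v₀, w} : Finset V) ∉ K)
    (hG : insert w (F.erase v₀) ∈ K) (hG' : insert w (F'.erase v₀) ∈ K) : F = F' := by
  have hFK : F ∈ K := facet_mem hF
  have hF'K : F' ∈ K := facet_mem hF'
  have hcross : ∀ x ∈ F.erase v₀, ∀ y ∈ F'.erase v₀, ({x, y} : Finset V) ∈ K := by
    intro x hx y hy
    by_cases hyR : y ∈ F.erase v₀
    · exact pair_mem hK hFK (mem_of_mem_erase hx) (mem_of_mem_erase hyR)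
    by_cases hxR' : x ∈ F'.erase v₀
    · exact pair_mem hK hF'K (mem_of_mem_erase hxR') (mem_of_mem_erase hy)
    by_contra hxy
    apply hns
    have hxv : x ≠ v₀ := ne_of_mem_erase hx
    have hyv : y ≠ v₀ := ne_of_mem_erase hy
    have hxw : x ≠ w := fun h => hwF (h ▸ mem_of_mem_erase hx)
    have hyw : y ≠ w := fun h => hwF' (h ▸ mem_of_mem_erase hy)
    have hxy' : x ≠ y := fun h => hyR (h ▸ hx)
    have hvw' : v₀ ≠ w := fun h => hwF (h ▸ hv₀F)
    refine ⟨x, v₀, y, w, ?_, ?_, ?_, ?_, ?_, hxy, hvw⟩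
    · rw [card_insert_of_notMem (by simp [hxv, hxy', hxw]),
        card_insert_of_notMem (by simp [Ne.symm hyv, hvw']),
        card_insert_of_notMem (by simp [hyw]), card_singleton]
    · exact pair_mem hK hFK (mem_of_mem_erase hx) hv₀F
    · exact pair_mem hK hF'K hv₀F' (mem_of_mem_erase hy)
    · exact pair_mem hK hG' (mem_insert_of_mem hy) (mem_insert_self w _)
    · exact pair_mem hK hG (mem_insert_self w _) (mem_insert_of_mem hx)
  have hU : insert w (F.erase v₀ ∪ F'.erase v₀) ∈ K := by
    apply hflag
    · intro u _; exact hvert u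
    · intro a ha b hb hab
      rcases mem_insert.mp ha with rfl | haRR
      · rcases mem_insert.mp hb with rfl | hbRR
        · exact absurd rfl hab
        · rcases mem_union.mp hbRR with hbR | hbR'
          · exact pair_mem hK hG (mem_insert_self _ _) (mem_insert_of_mem hbR)
          · exact pair_mem hK hG' (mem_insert_self _ _) (mem_insert_of_mem hbR')
      · rcases mem_insert.mp hb with rfl | hbRR
        · rcases mem_union.mp haRR with haR | haR'
          · exact pair_mem hK hG (mem_insert_of_mem haR) (mem_insert_self _ _)
          · exact pair_mem hK hG' (mem_insert_of_mem haR') (mem_insert_self _ _)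
        · rcases mem_union.mp haRR with haR | haR'
          · rcases mem_union.mp hbRR with hbR | hbR'
            · exact pair_mem hK hFK (mem_of_mem_erase haR) (mem_of_mem_erase hbR)
            · exact hcross a haR b hbR'
          · rcases mem_union.mp hbRR with hbR | hbR'
            · rw [pair_comm]; exact hcross b hbR a haR'
            · exact pair_mem hK hF'K (mem_of_mem_erase haR') (mem_of_mem_erase hbR')
  have hwRR : w ∉ F.erase v₀ ∪ F'.erase v₀ := by
    intro h
    rcases mem_union.mp h with h | h
    · exact hwF (mem_of_mem_erase h)
    · exact hwF' (mem_of_mem_erase h)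
  have hle : (insert w (F.erase v₀ ∪ F'.erase v₀)).card ≤ d + 1 :=
    card_face_le hK hpure hU
  rw [card_insert_of_notMem hwRR] at hle
  have hRcard : (F.erase v₀).card = d := by
    rw [card_erase_of_mem hv₀F, hpure F hF]; omega
  have hR'card : (F'.erase v₀).card = d := by
    rw [card_erase_of_mem hv₀F', hpure F' hF']; omega
  have hRR : F.erase v₀ ∪ F'.erase v₀ = F.erase v₀ :=
    (eq_of_subset_of_card_le subset_union_left (by omega)).symm
  have hR'R : F'.erase v₀ = F.erase v₀ := by
    have hsub : F'.erase v₀ ⊆ F.erase v₀ := hRR ▸ subset_union_right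
    exact eq_of_subset_of_card_le hsub (by omega)
  calc F = insert v₀ (F.erase v₀) := (insert_erase hv₀F).symm
    _ = insert v₀ (F'.erase v₀) := by rw [hR'R]
    _ = F' := insert_erase hv₀F'

/-- Handshake: summing the number of facets over the vertices of the link. -/
lemma handshake {K : Finset (Finset V)} {d : ℕ} (hpure : IsPure K d) (σ : Finset V) :
    ∑ v ∈ univ \ σ, fcnt K (insert v σ) = (d + 1 - σ.card) * fcnt K σ := by
  have key : ∀ v : V, ((facets K).filter fun F => insert v σ ⊆ F)
      = ((facets K).filter fun F => σ ⊆ F).filter fun F => v ∈ F := by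
    intro v
    ext F
    simp only [mem_filter, insert_subset_iff]
    tauto
  calc ∑ v ∈ univ \ σ, fcnt K (insert v σ)
      = ∑ v ∈ univ \ σ, ∑ F ∈ (facets K).filter (fun F => σ ⊆ F),
          if v ∈ F then 1 else 0 := by
        refine sum_congr rfl fun v _ => ?_
        rw [fcnt, key v, card_filter]
    _ = ∑ F ∈ (facets K).filter (fun F => σ ⊆ F), ∑ v ∈ univ \ σ,
          if v ∈ F then 1 else 0 := sum_comm
    _ = ∑ F ∈ (facets K).filter (fun F => σ ⊆ F), (d + 1 - σ.card) := by
        refine sum_congr rfl fun F hF => ?_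
        have hσF : σ ⊆ F := (mem_filter.mp hF).2
        have h1 : ∑ v ∈ univ \ σ, (if v ∈ F then 1 else 0)
            = ((univ \ σ).filter fun v => v ∈ F).card := (card_filter _ _).symm
        have h2 : (univ \ σ).filter (fun v => v ∈ F) = F \ σ := by
          ext z
          simp only [mem_filter, mem_sdiff, mem_univ, true_and]
          tauto
        rw [h1, h2, card_sdiff_of_subset hσF, hpure F (mem_filter.mp hF).1]
    _ = (d + 1 - σ.card) * fcnt K σ := by
        rw [sum_const, smul_eq_mul, mul_comm, fcnt]

/-- The numeric sequences: `(NP j).1` bounds link vertex counts,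
`(NP j).2` bounds link facet counts, in codimension `j+1`. -/
noncomputable def NP : ℕ → ℝ × ℝ
  | 0 => (2, 2)
  | j + 1 =>
      (1 + (NP j).1 + (NP j).2, (1 + (NP j).1 + (NP j).2) * (NP j).2 / ((j : ℝ) + 2))

lemma NP_zero : NP 0 = ((2 : ℝ), (2 : ℝ)) := rfl

lemma NP_succ (j : ℕ) : NP (j + 1)
    = (1 + (NP j).1 + (NP j).2, (1 + (NP j).1 + (NP j).2) * (NP j).2 / ((j : ℝ) + 2)) :=
  rfl

lemma NP_pos : ∀ j : ℕ, 0 < (NP j).1 ∧ 0 < (NP j).2 := by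
  intro j
  induction j with
  | zero => constructor <;> norm_num [NP_zero]
  | succ j ih =>
    obtain ⟨h1, h2⟩ := ih
    constructor
    · rw [NP_succ]; dsimp only; linarith
    · rw [NP_succ]; dsimp only
      apply div_pos (mul_pos (by linarith) h2) (by positivity)

/-- The main combinatorial induction. -/
lemma main_bound {K : Finset (Finset V)} {d : ℕ} (hK : IsComplex K)
    (hvert : ∀ v : V, ({v} : Finset V) ∈ K) (hpure : IsPure K d) (hflag : IsFlag K)
    (hns : NoSquare K) (hfree : NoFree K d) :
    ∀ j : ℕ, j ≤ d → ∀ σ ∈ K, σ.card = d - j →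
      (NP j).1 ≤ (vcnt K σ : ℝ) ∧ (NP j).2 ≤ (fcnt K σ : ℝ) := by
  intro j
  induction j with
  | zero =>
    intro _ σ hσ hcard
    rw [Nat.sub_zero] at hcard
    have h2 : 2 ≤ fcnt K σ := hfree σ hσ hcard
    constructor
    · obtain ⟨F, hFm, G, hGm, hFG⟩ := one_lt_card.mp (by omega : 1 < fcnt K σ)
      have hFfac : F ∈ facets K := (mem_filter.mp hFm).1
      have hσF : σ ⊆ F := (mem_filter.mp hFm).2
      have hGfac : G ∈ facets K := (mem_filter.mp hGm).1
      have hσG : σ ⊆ G := (mem_filter.mp hGm).2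
      have hFc1 : (F \ σ).card = 1 := by
        rw [card_sdiff_of_subset hσF, hpure F hFfac, hcard]; omega
      have hGc1 : (G \ σ).card = 1 := by
        rw [card_sdiff_of_subset hσG, hpure G hGfac, hcard]; omega
      obtain ⟨x, hx⟩ := card_eq_one.mp hFc1
      obtain ⟨y, hy⟩ := card_eq_one.mp hGc1
      have hxm : x ∈ F \ σ := hx ▸ mem_singleton_self x
      have hym : y ∈ G \ σ := hy ▸ mem_singleton_self y
      have hFeq : F = σ ∪ {x} := by rw [← union_sdiff_of_subset hσF, hx]
      have hGeq : G = σ ∪ {y} := by rw [← union_sdiff_of_subset hσG, hy]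
      have hxy : x ≠ y := by
        intro h
        exact hFG (by rw [hFeq, hGeq, h])
      have hsub : ({x, y} : Finset V) ⊆ univ.filter fun v => v ∉ σ ∧ insert v σ ∈ K := by
        intro z hz
        rcases mem_insert.mp hz with rfl | hz
        · refine mem_filter.mpr ⟨mem_univ _, (mem_sdiff.mp hxm).2, ?_⟩
          exact hK.2 F (facet_mem hFfac) _ (insert_subset (mem_sdiff.mp hxm).1 hσF)
        · rw [mem_singleton.mp hz]
          refine mem_filter.mpr ⟨mem_univ _, (mem_sdiff.mp hym).2, ?_⟩
          exact hK.2 G (facet_mem hGfac) _ (insert_subset (mem_sdiff.mp hym).1 hσG)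
      have : 2 ≤ vcnt K σ := by
        rw [vcnt, ← card_pair hxy]
        exact card_le_card hsub
      show (2 : ℝ) ≤ (vcnt K σ : ℝ)
      exact_mod_cast this
    · show (2 : ℝ) ≤ (fcnt K σ : ℝ)
      exact_mod_cast h2
  | succ j ih =>
    intro hjd σ hσ hcard
    have hj : j ≤ d := Nat.le_of_succ_le hjd
    obtain ⟨F₀, hF₀, hσF₀⟩ := exists_facet hK hσ
    have hF₀card : F₀.card = d + 1 := hpure F₀ hF₀
    have hne : (F₀ \ σ).Nonempty := by
      rw [← card_pos, card_sdiff_of_subset hσF₀, hF₀card, hcard]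
      omega
    obtain ⟨v₀, hv₀mem⟩ := hne
    have hv₀F₀ : v₀ ∈ F₀ := (mem_sdiff.mp hv₀mem).1
    have hv₀σ : v₀ ∉ σ := (mem_sdiff.mp hv₀mem).2
    have hσvK : insert v₀ σ ∈ K :=
      hK.2 F₀ (facet_mem hF₀) _ (insert_subset hv₀F₀ hσF₀)
    have hσvcard : (insert v₀ σ).card = d - j := by
      rw [card_insert_of_notMem hv₀σ, hcard]; omega
    obtain ⟨ihN, ihP⟩ := ih hj (insert v₀ σ) hσvK hσvcard
    set A := univ.filter (fun u => u ∉ insert v₀ σ ∧ insert u (insert v₀ σ) ∈ K) with hA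
    set B := univ.filter
      (fun w => w ∉ insert v₀ σ ∧ insert w σ ∈ K ∧ insert w (insert v₀ σ) ∉ K) with hB
    have hAcard : A.card = vcnt K (insert v₀ σ) := rfl
    have hBge : fcnt K (insert v₀ σ) ≤ B.card := by
      have hch : ∀ F : Finset V, ∃ w : V,
          F ∈ (facets K).filter (fun G => insert v₀ σ ⊆ G) →
          w ∉ F ∧ ({v₀, w} : Finset V) ∉ K ∧ insert w (F.erase v₀) ∈ K := by
        intro F
        by_cases hFm : F ∈ (facets K).filter (fun G => insert v₀ σ ⊆ G)
        · obtain ⟨w, h1, h2, h3⟩ := second_ext hK hvert hpure hflag hfree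
            (mem_filter.mp hFm).1 ((mem_filter.mp hFm).2 (mem_insert_self v₀ σ))
          exact ⟨w, fun _ => ⟨h1, h2, h3⟩⟩
        · exact ⟨v₀, fun h => absurd h hFm⟩
      choose f hf using hch
      apply card_le_card_of_injOn f
      · intro F hFm
        obtain ⟨hw1, hw2, hw3⟩ := hf F hFm
        have hσvF : insert v₀ σ ⊆ F := (mem_filter.mp hFm).2
        rw [hB, mem_coe, mem_filter]
        refine ⟨mem_univ _, fun h => hw1 (hσvF h), ?_, ?_⟩
        · refine hK.2 _ hw3 _ ?_
          intro z hz
          rcases mem_insert.mp hz with rfl | hzσ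
          · exact mem_insert_self _ _
          · refine mem_insert_of_mem (mem_erase.mpr ⟨fun h => hv₀σ (h ▸ hzσ), ?_⟩)
            exact hσvF (mem_insert_of_mem hzσ)
        · intro hmem
          exact hw2 (pair_mem hK hmem
            (mem_insert_of_mem (mem_insert_self v₀ σ)) (mem_insert_self _ _))
      · intro F hFm' F' hF'm' heq
        rw [mem_coe] at hFm' hF'm'
        obtain ⟨hw1, hw2, hw3⟩ := hf F hFm'
        obtain ⟨hw1', hw2', hw3'⟩ := hf F' hF'm'
        rw [← heq] at hw1' hw2' hw3'
        exact ext_unique hK hvert hpure hflag hns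
          (mem_filter.mp hFm').1 (mem_filter.mp hF'm').1
          ((mem_filter.mp hFm').2 (mem_insert_self v₀ σ))
          ((mem_filter.mp hF'm').2 (mem_insert_self v₀ σ))
          hw1 hw1' hw2 hw3 hw3'
    have hdisj : Disjoint A B := by
      rw [disjoint_left]
      intro a haA haB
      exact (mem_filter.mp haB).2.2.2 (mem_filter.mp haA).2.2
    have hv₀AB : v₀ ∉ A ∪ B := by
      intro h
      rcases mem_union.mp h with h | h
      · exact (mem_filter.mp h).2.1 (mem_insert_self _ _)
      · exact (mem_filter.mp h).2.1 (mem_insert_self _ _)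
    have hsubV : insert v₀ (A ∪ B) ⊆ univ.filter fun v => v ∉ σ ∧ insert v σ ∈ K := by
      intro a ha
      rcases mem_insert.mp ha with rfl | hab
      · exact mem_filter.mpr ⟨mem_univ _, hv₀σ, hσvK⟩
      · rcases mem_union.mp hab with haA | haB
        · obtain ⟨-, hnσv, hins⟩ := mem_filter.mp haA
          refine mem_filter.mpr ⟨mem_univ _, fun h => hnσv (mem_insert_of_mem h), ?_⟩
          refine hK.2 _ hins _ ?_
          intro z hz
          rcases mem_insert.mp hz with rfl | hzσ
          · exact mem_insert_self _ _
          · exact mem_insert_of_mem (mem_insert_of_mem hzσ)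
        · obtain ⟨-, hnσv, hins, -⟩ := mem_filter.mp haB
          exact mem_filter.mpr ⟨mem_univ _, fun h => hnσv (mem_insert_of_mem h), hins⟩
    have hvcount : 1 + A.card + B.card ≤ vcnt K σ := by
      have h1 : (insert v₀ (A ∪ B)).card = A.card + B.card + 1 := by
        rw [card_insert_of_notMem hv₀AB, card_union_of_disjoint hdisj]
      have h2 := card_le_card hsubV
      rw [h1] at h2
      rw [vcnt]
      omega
    have part1 : (NP (j + 1)).1 ≤ (vcnt K σ : ℝ) := by
      rw [NP_succ]; dsimp only
      have hb : (fcnt K (insert v₀ σ) : ℝ) ≤ (B.card : ℝ) := by exact_mod_cast hBge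
      have ha : (vcnt K (insert v₀ σ) : ℝ) ≤ (A.card : ℝ) := by rw [hAcard]
      have hc : ((1 + A.card + B.card : ℕ) : ℝ) ≤ (vcnt K σ : ℝ) := by
        exact_mod_cast hvcount
      push_cast at hc
      linarith
    refine ⟨part1, ?_⟩
    have hhs : ∑ v ∈ univ \ σ, fcnt K (insert v σ) = (j + 2) * fcnt K σ := by
      rw [handshake hpure σ, hcard]
      congr 1
      omega
    have hPj := (NP_pos j).2
    have h2 : (vcnt K σ : ℝ) * (NP j).2
        ≤ ∑ v ∈ univ.filter (fun v => v ∉ σ ∧ insert v σ ∈ K),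
            (fcnt K (insert v σ) : ℝ) := by
      have hterm : ∀ v ∈ univ.filter (fun v => v ∉ σ ∧ insert v σ ∈ K),
          (NP j).2 ≤ (fcnt K (insert v σ) : ℝ) := by
        intro v hv
        obtain ⟨-, hvσ, hvK⟩ := mem_filter.mp hv
        exact (ih hj _ hvK (by rw [card_insert_of_notMem hvσ, hcard]; omega)).2
      have := Finset.card_nsmul_le_sum _ _ _ hterm
      rw [nsmul_eq_mul] at this
      exact this
    have h3 : ∑ v ∈ univ.filter (fun v => v ∉ σ ∧ insert v σ ∈ K),
          (fcnt K (insert v σ) : ℝ)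
        ≤ ∑ v ∈ univ \ σ, (fcnt K (insert v σ) : ℝ) := by
      apply sum_le_sum_of_subset_of_nonneg
      · intro v hv
        obtain ⟨-, hvσ, -⟩ := mem_filter.mp hv
        exact mem_sdiff.mpr ⟨mem_univ _, hvσ⟩
      · intro v _ _
        positivity
    have h4 : ∑ v ∈ univ \ σ, (fcnt K (insert v σ) : ℝ)
        = ((j : ℝ) + 2) * (fcnt K σ : ℝ) := by
      have hc := congrArg (fun n : ℕ => (n : ℝ)) hhs
      push_cast at hc
      linarith [hc]
    have hNv : (NP (j + 1)).1 * (NP j).2 ≤ ((j : ℝ) + 2) * (fcnt K σ : ℝ) := by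
      have hm := mul_le_mul_of_nonneg_right part1 hPj.le
      calc (NP (j + 1)).1 * (NP j).2 ≤ (vcnt K σ : ℝ) * (NP j).2 := hm
        _ ≤ ((j : ℝ) + 2) * (fcnt K σ : ℝ) := by linarith
    have he1 : (NP (j + 1)).1 = 1 + (NP j).1 + (NP j).2 := by rw [NP_succ]
    have he2 : (NP (j + 1)).2
        = (1 + (NP j).1 + (NP j).2) * (NP j).2 / ((j : ℝ) + 2) := by rw [NP_succ]
    rw [he2, div_le_iff₀ (show (0 : ℝ) < (j : ℝ) + 2 by positivity)]
    rw [he1] at hNv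
    linarith

end FNS

namespace FNS

noncomputable def Ebd (j : ℕ) : ℝ := (25 / 12 : ℝ) ^ (2 ^ (j - 2))

lemma Ebd_pos (j : ℕ) : 0 < Ebd j := by unfold Ebd; positivity

lemma Ebd_succ {j : ℕ} (hj : 2 ≤ j) : Ebd (j + 1) = Ebd j * Ebd j := by
  unfold Ebd
  rw [← pow_add]
  congr 1
  have h1 : j + 1 - 2 = (j - 2) + 1 := by omega
  rw [h1, pow_succ]
  omega

lemma Q_bound : ∀ j : ℕ, 2 ≤ j → (4 / 3 : ℝ) * ((j : ℝ) + 2) * Ebd j ≤ (NP j).2 := by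
  intro j hj
  induction j, hj using Nat.le_induction with
  | base =>
    have h1 : NP 1 = ((5 : ℝ), (5 : ℝ)) := by
      rw [show (1 : ℕ) = 0 + 1 from rfl, NP_succ, NP_zero]
      norm_num
    have h2 : (NP 2).2 = 55 / 3 := by
      show (NP (1 + 1)).2 = 55 / 3
      rw [NP_succ, h1]
      norm_num
    rw [h2]
    unfold Ebd
    norm_num
  | succ j hj ih =>
    have hp := NP_pos j
    have hE := Ebd_pos j
    have hq : (2 : ℝ) ≤ (j : ℝ) := by exact_mod_cast hj
    have he2 : (NP (j + 1)).2
        = (1 + (NP j).1 + (NP j).2) * (NP j).2 / ((j : ℝ) + 2) := by rw [NP_succ]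
    rw [he2, Ebd_succ hj, le_div_iff₀ (show (0 : ℝ) < (j : ℝ) + 2 by positivity)]
    push_cast
    have hA : (4 / 3 * ((j : ℝ) + 2) * Ebd j) * (4 / 3 * ((j : ℝ) + 2) * Ebd j)
        ≤ (NP j).2 * (NP j).2 :=
      mul_self_le_mul_self (by positivity) ih
    have hfact : (0 : ℝ) ≤ (Ebd j * Ebd j) * (((j : ℝ) + 2) * ((j : ℝ) - 1)) :=
      mul_nonneg (by positivity) (mul_nonneg (by linarith) (by linarith))
    have hC : (NP j).2 * (NP j).2 ≤ (1 + (NP j).1 + (NP j).2) * (NP j).2 := by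
      nlinarith [hp.1, hp.2]
    nlinarith [hA, hC, hfact]

lemma Ebd_le_P {j : ℕ} (hj : 2 ≤ j) : Ebd j ≤ (NP j).2 := by
  have h := Q_bound j hj
  have hE := Ebd_pos j
  have hq : (2 : ℝ) ≤ (j : ℝ) := by exact_mod_cast hj
  nlinarith

end FNS

/-- A pure `d`-dimensional (`d ≥ 3`) flag-no-square simplicial complex with no
free `(d-1)`-faces has more than `(25/12) ^ (2 ^ (d-3))` vertices. -/
theorem vertices_lower_bound {V : Type} [DecidableEq V] [Fintype V]
    (d : ℕ) (hd : 3 ≤ d) (K : Finset (Finset V))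
    (hK : IsComplex K) (hvert : ∀ v : V, ({v} : Finset V) ∈ K)
    (hpure : IsPure K d) (hflag : IsFlag K) (hns : NoSquare K)
    (hfree : NoFree K d) :
    ((25 : ℝ) / 12) ^ 2 ^ (d - 3) < (fNum K 0 : ℝ) := by
  classical
  obtain ⟨e, rfl⟩ : ∃ e, d = e + 1 := ⟨d - 1, by omega⟩
  have he : 2 ≤ e := by omega
  obtain ⟨hN, -⟩ := FNS.main_bound hK hvert hpure hflag hns hfree (e + 1) le_rfl ∅ hK.1
    (by simp)
  have hNP1 : (FNS.NP (e + 1)).1 = 1 + (FNS.NP e).1 + (FNS.NP e).2 := by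
    rw [FNS.NP_succ]
  have hPe : FNS.Ebd e ≤ (FNS.NP e).2 := FNS.Ebd_le_P he
  have hvf : (FNS.vcnt K ∅ : ℝ) ≤ (fNum K 0 : ℝ) := by
    have hle : FNS.vcnt K ∅ ≤ fNum K 0 := by
      apply card_le_card_of_injOn (fun v => ({v} : Finset V))
      · intro v hv
        obtain ⟨-, -, hvK⟩ := mem_filter.mp hv
        refine mem_filter.mpr ⟨by simpa using hvK, by simp⟩
      · intro a _ b _ h
        exact singleton_inj.mp h
    exact_mod_cast hle
  have hepos := (FNS.NP_pos e).1
  have hEq : ((25 : ℝ) / 12) ^ 2 ^ (e + 1 - 3) = FNS.Ebd e := by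
    have h3 : e + 1 - 3 = e - 2 := by omega
    rw [h3]
    rfl
  rw [hEq]
  calc FNS.Ebd e ≤ (FNS.NP e).2 := hPe
    _ < 1 + (FNS.NP e).1 + (FNS.NP e).2 := by linarith
    _ = (FNS.NP (e + 1)).1 := hNP1.symm
    _ ≤ (FNS.vcnt K ∅ : ℝ) := hN
    _ ≤ (fNum K 0 : ℝ) := hvf
end

section
/- Let d ≥ 5 be an integer and let h_0, h_1, …, h_d be nonnegative integers satisfying the symmetry h_i = h_{d−i} for all i, with h_0 ≥ 1. Then C(d,2) · (Σ_{i=0}^{d} h_i) < 5 · (Σ_{i=0}^{d−2} C(d−i,2) · h_i). (Interpreting f_{d−1} = Σ_{i=0}^{d} h_i and f_{d−3} = Σ_{i=0}^{d−2} C(d−i,2) h_i as entries of the f-vector of a Gorenstein* complex with h-vector (h_i), this says the average number C(d,2)·f_{d−1}/f_{d−3} of facets containing a (d−3)-face is strictly less than 5.) -/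
lemma two_mul_choose_two (n : ℕ) : 2 * n.choose 2 = n * (n - 1) := by
  cases n with
  | zero => rfl
  | succ k =>
    rw [Nat.choose_two_right]
    have h2 : 2 ∣ (k + 1) * k := by
      rw [Nat.mul_comm]
      exact (Nat.even_mul_succ_self k).two_dvd
    simp only [Nat.add_sub_cancel]
    rw [Nat.mul_div_cancel' h2]

lemma key_choose (a b : ℕ) (hab : 5 ≤ a + b) :
    2 * (a + b).choose 2 ≤ 5 * (a.choose 2 + b.choose 2) := by
  have h1 := two_mul_choose_two (a + b)
  have h2 := two_mul_choose_two a
  have h3 := two_mul_choose_two b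
  rcases Nat.eq_zero_or_pos a with ha | ha
  · subst ha; simp; omega
  rcases Nat.eq_zero_or_pos b with hb | hb
  · subst hb; simp; omega
  obtain ⟨x, rfl⟩ := Nat.exists_eq_add_of_lt ha
  obtain ⟨y, rfl⟩ := Nat.exists_eq_add_of_lt hb
  simp only [Nat.zero_add] at *
  -- reduce to a polynomial inequality
  have hineq : 2 * ((x + 1 + (y + 1)) * (x + 1 + (y + 1) - 1))
      ≤ 5 * ((x + 1) * (x + 1 - 1) + (y + 1) * (y + 1 - 1)) := by
    have hxy : 3 ≤ x + y := by omega
    have hs1 : x + 1 + (y + 1) - 1 = x + y + 1 := by omega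
    have hs2 : x + 1 - 1 = x := by omega
    have hs3 : y + 1 - 1 = y := by omega
    rw [hs1, hs2, hs3]
    rcases Nat.lt_or_ge (x + y) 4 with hlt | hge
    · have hx3 : x ≤ 3 := by omega
      have hy3 : y ≤ 3 := by omega
      interval_cases x <;> interval_cases y <;> omega
    · zify
      nlinarith [sq_nonneg ((x : ℤ) - y), sq_nonneg ((x : ℤ) + y - 4)]
  omega

/-- Averaging lemma for `N₂`: if `d ≥ 5` and `(h_i)` are nonnegative integers
with `h_i = h_{d-i}` and `h_0 ≥ 1`, then
`C(d,2) · Σ_{i=0}^d h_i < 5 · Σ_{i=0}^{d-2} C(d-i,2) · h_i`. -/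
theorem average_lt_five (d : ℕ) (hd : 5 ≤ d) (h : ℕ → ℕ)
    (hsym : ∀ i ≤ d, h i = h (d - i)) (h0 : 1 ≤ h 0) :
    d.choose 2 * ∑ i ∈ Finset.range (d + 1), h i <
      5 * ∑ i ∈ Finset.range (d - 1), (d - i).choose 2 * h i := by
  have hT : ∑ i ∈ Finset.range (d - 1), (d - i).choose 2 * h i
      = ∑ i ∈ Finset.range (d + 1), (d - i).choose 2 * h i := by
    apply Finset.sum_subset (Finset.range_subset_range.mpr (by omega))
    intro i hi hni
    simp only [Finset.mem_range] at hi hni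
    rw [Nat.choose_eq_zero_of_lt (by omega), Nat.zero_mul]
  have hAB : ∑ i ∈ Finset.range (d + 1), (d - i).choose 2 * h i
      = ∑ i ∈ Finset.range (d + 1), i.choose 2 * h i := by
    have h1 : ∀ i ∈ Finset.range (d + 1),
        (d - i).choose 2 * h i = (d - i).choose 2 * h (d - i) := by
      intro i hi
      rw [← hsym i (by simpa [Nat.lt_succ_iff] using hi)]
    rw [Finset.sum_congr rfl h1]
    have h2 := Finset.sum_range_reflect (fun i => i.choose 2 * h i) (d + 1)
    simpa using h2
  have hmain : ∑ i ∈ Finset.range (d + 1), 2 * (d.choose 2 * h i)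
      < ∑ i ∈ Finset.range (d + 1), 5 * ((d - i).choose 2 * h i + i.choose 2 * h i) := by
    apply Finset.sum_lt_sum
    · intro i hi
      have hi' : i ≤ d := by simpa [Nat.lt_succ_iff] using hi
      have hk := key_choose (d - i) i (by omega)
      rw [show d - i + i = d by omega] at hk
      calc 2 * (d.choose 2 * h i) = (2 * d.choose 2) * h i := by ring
        _ ≤ (5 * ((d - i).choose 2 + i.choose 2)) * h i := Nat.mul_le_mul_right _ hk
        _ = 5 * ((d - i).choose 2 * h i + i.choose 2 * h i) := by ring
    · refine ⟨0, Finset.mem_range.mpr (by omega), ?_⟩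
      have hc : 0 < d.choose 2 := Nat.choose_pos (by omega)
      have hpos : 1 ≤ d.choose 2 * h 0 := Nat.mul_pos hc h0
      simp only [Nat.sub_zero, Nat.choose_zero_right]
      have : (0 : ℕ).choose 2 = 0 := rfl
      rw [this]
      omega
  have e1 : ∑ i ∈ Finset.range (d + 1), 2 * (d.choose 2 * h i)
      = 2 * (d.choose 2 * ∑ i ∈ Finset.range (d + 1), h i) := by
    rw [Finset.mul_sum, Finset.mul_sum]
  have e2 : ∑ i ∈ Finset.range (d + 1), 5 * ((d - i).choose 2 * h i + i.choose 2 * h i)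
      = 5 * ((∑ i ∈ Finset.range (d + 1), (d - i).choose 2 * h i)
          + ∑ i ∈ Finset.range (d + 1), i.choose 2 * h i) := by
    rw [← Finset.mul_sum, Finset.sum_add_distrib]
  rw [e1, e2, ← hAB] at hmain
  rw [hT]
  linarith
end
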